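/- Let a ∈ ℝ, let I_f be an interval with least element a, nonempty interior, and I_f ⊂ [a,∞), let m ∈ ℕ*, let α = (α₁,…,α_m) ∈ (0,1]^m, let q_a ∈ ℝ^m, and let f : ℝ^m × I_f → ℝ^m be a Carathéodory function that preserves integrability, i.e. f(q(·),·) is locally integrable on I_f for every locally integrable q : I_f → ℝ^m. Then a function q : I_f → ℝ^m is a global solution of the Riemann–Liouville Cauchy problem (D^{α_i}_{a+}[q_i] = f_i(q(·),·) a.e. on I_f, with I^{1−α_i}_{a+}[q_i](a) = (q_a)_i for each i) if and only if q is locally integrable on I_f and, for almost every t ∈ I_f and every i ∈ {1,…,m}, q_i(t) = ((t−a)^{α_i−1}/Γ(α_i))·(q_a)_i + (1/Γ(α_i)) ∫_a^t (t−τ)^{α_i−1} f_i(q(τ),τ) dτ. -/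

import Mathlib

open MeasureTheory Set

/-- Left Riemann–Liouville fractional integral of order `α` with base point `a`
(for `α = 0` it is the identity). -/
noncomputable def rlInt (a α : ℝ) (q : ℝ → ℝ) (t : ℝ) : ℝ :=
  if α = 0 then q t else (1 / Real.Gamma α) * ∫ τ in a..t, (t - τ) ^ (α - 1) * q τ

/-- `q` is locally integrable on the interval `I` with least element `a`. -/
def LocIntegrableOn (a : ℝ) (I : Set ℝ) (q : ℝ → ℝ) : Prop :=
  ∀ b ∈ I, MeasureTheory.IntegrableOn q (Set.Icc a b)

/-- `q` is a global solution on `If` of the Riemann–Liouville Cauchy problem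
`D^{α_i}_{a+}[q_i] = F_i(q(·),·)` a.e. on `If`, `I^{1-α_i}_{a+}[q_i](a) = (qa)_i`:
each `q_i` is locally integrable, `I^{1-α_i}_{a+}[q_i]` agrees a.e. on `If` with a locally
absolutely continuous function `t ↦ (qa)_i + ∫_a^t h`, whose value at `a` is `(qa)_i`
and whose derivative `h` (the RL fractional derivative) equals `F_i(q(t),t)` a.e. -/
def IsRLSolution (a : ℝ) (If : Set ℝ) {m : ℕ} (α : Fin m → ℝ) (qa : Fin m → ℝ)
    (F : (Fin m → ℝ) → ℝ → Fin m → ℝ) (q : ℝ → Fin m → ℝ) : Prop :=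
  (∀ i, LocIntegrableOn a If fun t => q t i) ∧
  ∀ i, ∃ h : ℝ → ℝ, LocIntegrableOn a If h ∧
    (∀ᵐ t ∂(MeasureTheory.volume.restrict If),
      rlInt a (1 - α i) (fun τ => q τ i) t = qa i + ∫ τ in a..t, h τ) ∧
    (∀ᵐ t ∂(MeasureTheory.volume.restrict If), h t = F (q t) t i)



open intervalIntegral


lemma realBeta_integrable {p r : ℝ} (hp : 0 < p) (hr : 0 < r) :
    IntervalIntegrable (fun x : ℝ => x ^ (p - 1) * (1 - x) ^ (r - 1)) volume 0 1 := by
  have hc : IntervalIntegrable (fun x : ℝ => (x : ℂ) ^ ((p : ℂ) - 1) * (1 - (x : ℂ)) ^ ((r : ℂ) - 1))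
      volume 0 1 := Complex.betaIntegral_convergent (by simpa using hp) (by simpa using hr)
  rw [intervalIntegrable_iff_integrableOn_Ioc_of_le (by norm_num)] at hc ⊢
  have hre : IntegrableOn (fun x : ℝ => ((x : ℂ) ^ ((p : ℂ) - 1) * (1 - (x : ℂ)) ^ ((r : ℂ) - 1)).re)
      (Ioc (0:ℝ) 1) volume := hc.re
  refine hre.congr_fun (fun x hx => ?_) measurableSet_Ioc
  have hx0 : (0:ℝ) ≤ x := hx.1.le
  have hx1 : (0:ℝ) ≤ 1 - x := by linarith [hx.2]
  have e1 : ((x : ℂ)) ^ ((p : ℂ) - 1) = ((x ^ (p - 1) : ℝ) : ℂ) := by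
    rw [Complex.ofReal_cpow hx0]; push_cast; ring_nf
  have e2 : (1 - (x : ℂ)) ^ ((r : ℂ) - 1) = (((1 - x) ^ (r - 1) : ℝ) : ℂ) := by
    rw [show (1 - (x:ℂ)) = (((1 - x : ℝ)) : ℂ) by push_cast; ring, Complex.ofReal_cpow hx1]
    push_cast; ring_nf
  dsimp only
  rw [e1, e2, ← Complex.ofReal_mul, Complex.ofReal_re]

lemma realBeta_eq {p r : ℝ} (hp : 0 < p) (hr : 0 < r) :
    ∫ x in (0:ℝ)..1, x ^ (p - 1) * (1 - x) ^ (r - 1)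
      = Real.Gamma p * Real.Gamma r / Real.Gamma (p + r) := by
  have key := Complex.Gamma_mul_Gamma_eq_betaIntegral (s := (p:ℂ)) (t := (r:ℂ))
    (by simpa using hp) (by simpa using hr)
  have hbeta : Complex.betaIntegral (p : ℂ) (r : ℂ)
      = ((∫ x in (0:ℝ)..1, x ^ (p - 1) * (1 - x) ^ (r - 1) : ℝ) : ℂ) := by
    rw [Complex.betaIntegral, ← intervalIntegral.integral_ofReal]
    refine intervalIntegral.integral_congr_ae ?_
    filter_upwards with x hx
    rw [uIoc_of_le (by norm_num : (0:ℝ) ≤ 1)] at hx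
    have hx0 : (0:ℝ) ≤ x := hx.1.le
    have hx1 : (0:ℝ) ≤ 1 - x := by linarith [hx.2]
    have e1 : ((x : ℂ)) ^ ((p : ℂ) - 1) = ((x ^ (p - 1) : ℝ) : ℂ) := by
      rw [Complex.ofReal_cpow hx0]; push_cast; ring_nf
    have e2 : (1 - (x : ℂ)) ^ ((r : ℂ) - 1) = (((1 - x) ^ (r - 1) : ℝ) : ℂ) := by
      rw [show (1 - (x:ℂ)) = (((1 - x : ℝ)) : ℂ) by push_cast; ring, Complex.ofReal_cpow hx1]
      push_cast; ring_nf
    rw [e1, e2, ← Complex.ofReal_mul]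
  rw [hbeta] at key
  rw [show ((p:ℂ) + r) = ((p + r : ℝ) : ℂ) by push_cast; ring] at key
  rw [Complex.Gamma_ofReal, Complex.Gamma_ofReal, Complex.Gamma_ofReal] at key
  have key' : Real.Gamma p * Real.Gamma r
      = Real.Gamma (p + r) * ∫ x in (0:ℝ)..1, x ^ (p - 1) * (1 - x) ^ (r - 1) := by
    exact_mod_cast key
  have hG : Real.Gamma (p + r) ≠ 0 := (Real.Gamma_pos_of_pos (by linarith)).ne'
  field_simp [key']
  rw [key']; ring

-- from beta.lean
lemma beta_eqOn {p r u t : ℝ} (h : u < t) {s : ℝ} (hs : s ∈ Set.Icc u t) :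
    (t - s) ^ (r - 1) * (s - u) ^ (p - 1)
      = ((t - u) ^ (p - 1) * (t - u) ^ (r - 1)) *
        (((s - u) / (t - u)) ^ (p - 1) * (1 - (s - u) / (t - u)) ^ (r - 1)) := by
  have hc : (0:ℝ) < t - u := by linarith
  have h1 : (0:ℝ) ≤ s - u := by linarith [hs.1]
  have h2 : (0:ℝ) ≤ t - s := by linarith [hs.2]
  have e1 : ((s - u) / (t - u)) ^ (p - 1) = (s - u) ^ (p - 1) / (t - u) ^ (p - 1) :=
    Real.div_rpow h1 hc.le _
  have e2 : (1 - (s - u) / (t - u)) = (t - s) / (t - u) := by field_simp; ring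
  have e3 : ((t - s) / (t - u)) ^ (r - 1) = (t - s) ^ (r - 1) / (t - u) ^ (r - 1) :=
    Real.div_rpow h2 hc.le _
  rw [e1, e2, e3]
  have hp1 : (t - u) ^ (p - 1) ≠ 0 := (Real.rpow_pos_of_pos hc _).ne'
  have hr1 : (t - u) ^ (r - 1) ≠ 0 := (Real.rpow_pos_of_pos hc _).ne'
  field_simp

lemma beta_comp_integrable {p r u t : ℝ} (hp : 0 < p) (hr : 0 < r) (h : u < t) :
    IntervalIntegrable (fun s : ℝ => ((s - u) / (t - u)) ^ (p - 1) *
      (1 - (s - u) / (t - u)) ^ (r - 1)) volume u t := by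
  have hc : (0:ℝ) < t - u := by linarith
  have h2 := (realBeta_integrable hp hr).comp_mul_left (c := (t - u)⁻¹)
  rw [show (0:ℝ) / (t - u)⁻¹ = 0 by simp, show (1:ℝ) / (t - u)⁻¹ = t - u by
    field_simp] at h2
  have h3 := h2.comp_sub_right u
  rw [show (0:ℝ) + u = u by ring, show t - u + u = t by ring] at h3
  refine h3.congr ?_
  intro s _
  dsimp only
  rw [div_eq_inv_mul]

lemma beta_integrable {p r u t : ℝ} (hp : 0 < p) (hr : 0 < r) (h : u < t) :
    IntervalIntegrable (fun s => (t - s) ^ (r - 1) * (s - u) ^ (p - 1)) volume u t := by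
  refine (((beta_comp_integrable hp hr h).const_mul
    ((t - u) ^ (p - 1) * (t - u) ^ (r - 1))).congr ?_)
  intro s hs
  rw [uIoc_of_le h.le] at hs
  exact (beta_eqOn h ⟨hs.1.le, hs.2⟩).symm

lemma beta_eval {p r u t : ℝ} (hp : 0 < p) (hr : 0 < r) (h : u < t) :
    ∫ s in u..t, (t - s) ^ (r - 1) * (s - u) ^ (p - 1)
      = (t - u) ^ (p + r - 1) * (Real.Gamma p * Real.Gamma r / Real.Gamma (p + r)) := by
  have hc : (0:ℝ) < t - u := by linarith
  have e : ∫ s in u..t, (t - s) ^ (r - 1) * (s - u) ^ (p - 1)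
      = ((t - u) ^ (p - 1) * (t - u) ^ (r - 1)) *
        ∫ s in u..t, (((s - u) / (t - u)) ^ (p - 1) * (1 - (s - u) / (t - u)) ^ (r - 1)) := by
    rw [← intervalIntegral.integral_const_mul]
    refine intervalIntegral.integral_congr (fun s hs => ?_)
    rw [uIcc_of_le h.le] at hs
    exact beta_eqOn h hs
  rw [e]
  have e2 : ∫ s in u..t, (((s - u) / (t - u)) ^ (p - 1) * (1 - (s - u) / (t - u)) ^ (r - 1))
      = (t - u) * ∫ x in (0:ℝ)..1, x ^ (p - 1) * (1 - x) ^ (r - 1) := by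
    have := intervalIntegral.integral_comp_sub_right
      (fun y : ℝ => (y / (t - u)) ^ (p - 1) * (1 - y / (t - u)) ^ (r - 1)) u (a := u) (b := t)
    rw [show u - u = (0:ℝ) by ring] at this
    rw [this]
    have h2 := intervalIntegral.integral_comp_div
      (fun x : ℝ => x ^ (p - 1) * (1 - x) ^ (r - 1)) (c := t - u) hc.ne' (a := 0) (b := t - u)
    rw [show (0:ℝ) / (t - u) = 0 by simp, div_self hc.ne'] at h2
    rw [h2, smul_eq_mul]
  rw [e2, realBeta_eq hp hr]
  rw [show (t-u) ^ (p-1) * (t-u) ^ (r-1) * ((t-u) * (Real.Gamma p * Real.Gamma r / Real.Gamma (p+r)))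
    = ((t-u) ^ (p-1) * (t-u) ^ (r-1) * (t-u) ^ (1:ℝ)) * (Real.Gamma p * Real.Gamma r / Real.Gamma (p+r))
    by rw [Real.rpow_one]; ring]
  rw [← Real.rpow_add hc, ← Real.rpow_add hc]
  ring_nf

noncomputable def rlK (a γ : ℝ) (g : ℝ → ℝ) (s : ℝ) : ℝ := ∫ τ in a..s, (s - τ) ^ (γ - 1) * g τ

lemma rlK_one (a : ℝ) (g : ℝ → ℝ) (s : ℝ) : rlK a 1 g s = ∫ τ in a..s, g τ := by
  unfold rlK
  norm_num

-- shifted rpow integrable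
lemma rpow_shift_integrable {γ : ℝ} (hγ : 0 < γ) (u v : ℝ) :
    IntervalIntegrable (fun s => (s - u) ^ (γ - 1)) volume u v := by
  have h := (intervalIntegral.intervalIntegrable_rpow' (a := 0) (b := v - u)
    (r := γ - 1) (by linarith)).comp_sub_right u
  rw [show (0:ℝ) + u = u by ring, show v - u + u = v by ring] at h
  exact h

lemma rpow_refl_integrable {γ : ℝ} (hγ : 0 < γ) (u v : ℝ) :
    IntervalIntegrable (fun s => (v - s) ^ (γ - 1)) volume u v := by
  have h := (intervalIntegral.intervalIntegrable_rpow' (a := v - u) (b := 0)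
    (r := γ - 1) (by linarith)).comp_sub_left v
  rw [show v - (v - u) = u by ring, show v - 0 = v by ring] at h
  exact h

lemma rpow_prim {γ : ℝ} (hγ : 0 < γ) {u v : ℝ} (huv : u ≤ v) :
    ∫ s in u..v, (s - u) ^ (γ - 1) = (v - u) ^ γ / γ := by
  have h := intervalIntegral.integral_comp_sub_right (fun y : ℝ => y ^ (γ - 1)) u
    (a := u) (b := v)
  rw [show u - u = (0:ℝ) by ring] at h
  rw [h, integral_rpow (Or.inl (by linarith))]
  rw [Real.zero_rpow (by linarith : γ - 1 + 1 ≠ 0)]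
  norm_num

lemma rpow_prim' {γ : ℝ} (hγ : 0 < γ) {u v : ℝ} (huv : u ≤ v) :
    ∫ s in u..v, (v - s) ^ (γ - 1) = (v - u) ^ γ / γ := by
  have h := intervalIntegral.integral_comp_sub_left (fun y : ℝ => y ^ (γ - 1)) v
    (a := u) (b := v)
  rw [show v - v = (0:ℝ) by ring] at h
  rw [h, integral_rpow (Or.inl (by linarith))]
  rw [Real.zero_rpow (by linarith : γ - 1 + 1 ≠ 0)]
  norm_num

lemma kernel_aesm {S : Set ℝ} {g : ℝ → ℝ}
    (hg : AEStronglyMeasurable g (volume.restrict S)) {k : ℝ × ℝ → ℝ} (hk : Measurable k) :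
    AEStronglyMeasurable (fun p : ℝ × ℝ => ({q : ℝ × ℝ | q.2 ≤ q.1}.indicator
      (fun q => k q * g q.2)) p) ((volume.restrict S).prod (volume.restrict S)) := by
  have h1 : AEStronglyMeasurable (fun p : ℝ × ℝ => g p.2)
      ((volume.restrict S).prod (volume.restrict S)) := hg.comp_snd
  exact (hk.aestronglyMeasurable.mul h1).indicator
    (measurableSet_le measurable_snd measurable_fst)

lemma sub_rpow_meas (c γ : ℝ) : Measurable (fun p : ℝ × ℝ => (c - p.1) ^ γ) := by
  fun_prop

lemma sub_rpow_meas2 (γ : ℝ) : Measurable (fun p : ℝ × ℝ => (p.1 - p.2) ^ γ) := by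
  fun_prop

section T2
variable {a b γ : ℝ} {g : ℝ → ℝ}

lemma rlK_integrable_prod (hγ : 0 < γ) (hab : a ≤ b) (hg : IntegrableOn g (Icc a b)) :
    Integrable (fun p : ℝ × ℝ => ({q : ℝ × ℝ | q.2 ≤ q.1}.indicator
      (fun q => (q.1 - q.2) ^ (γ - 1) * g q.2)) p)
      ((volume.restrict (Icc a b)).prod (volume.restrict (Icc a b))) := by
  set μ := volume.restrict (Icc a b) with hμ
  have hm := kernel_aesm (S := Icc a b) (g := g) hg.aestronglyMeasurable
    (k := fun q : ℝ × ℝ => (q.1 - q.2) ^ (γ - 1)) (sub_rpow_meas2 _)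
  rw [integrable_prod_iff' hm]
  constructor
  · filter_upwards [ae_restrict_mem measurableSet_Icc] with τ hτ
    have he : (fun s => ({q : ℝ × ℝ | q.2 ≤ q.1}.indicator
        (fun q => (q.1 - q.2) ^ (γ - 1) * g q.2)) (s, τ))
        = fun s => (Ici τ).indicator (fun s => (s - τ) ^ (γ - 1) * g τ) s := by
      funext s
      by_cases h : τ ≤ s <;> simp [indicator, h]
    have hset : Ici τ ∩ Icc a b = Icc τ b := by
      ext x; simp only [mem_inter_iff, mem_Ici, mem_Icc]
      constructor
      · rintro ⟨h1, _, h3⟩; exact ⟨h1, h3⟩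
      · rintro ⟨h1, h2⟩; exact ⟨h1, hτ.1.trans h1, h2⟩
    rw [he, integrable_indicator_iff measurableSet_Ici]
    rw [IntegrableOn, Measure.restrict_restrict measurableSet_Ici, hset]
    have := ((rpow_shift_integrable hγ τ b).mul_const (g τ))
    rw [intervalIntegrable_iff_integrableOn_Ioc_of_le hτ.2] at this
    rwa [← integrableOn_Icc_iff_integrableOn_Ioc] at this
  · have hmeas := ((hm.prod_swap).norm).integral_prod_right'
    refine Integrable.mono' ((hg.norm.const_mul ((b - a) ^ γ / γ))) hmeas ?_
    filter_upwards [ae_restrict_mem measurableSet_Icc] with τ hτ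
    have hτb : τ ≤ b := hτ.2
    have he : ∀ s, ‖({q : ℝ × ℝ | q.2 ≤ q.1}.indicator
        (fun q => (q.1 - q.2) ^ (γ - 1) * g q.2)) (s, τ)‖
        = (Ici τ).indicator (fun s => (s - τ) ^ (γ - 1)) s * |g τ| := by
      intro s
      by_cases h : τ ≤ s
      · simp only [indicator, h, mem_setOf_eq, if_true, mem_Ici, if_pos h]
        rw [Real.norm_eq_abs, abs_mul, abs_of_nonneg (Real.rpow_nonneg (by linarith) _)]
      · simp [indicator, h]
    simp only [he]
    rw [MeasureTheory.integral_mul_const]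
    have hval : ∫ s, (Ici τ).indicator (fun s => (s - τ) ^ (γ - 1)) s ∂μ
        = (b - τ) ^ γ / γ := by
      have hset : Ici τ ∩ Icc a b = Icc τ b := by
        ext x; simp only [mem_inter_iff, mem_Ici, mem_Icc]
        constructor
        · rintro ⟨h1, _, h3⟩; exact ⟨h1, h3⟩
        · rintro ⟨h1, h2⟩; exact ⟨h1, hτ.1.trans h1, h2⟩
      rw [MeasureTheory.integral_indicator measurableSet_Ici,
        Measure.restrict_restrict measurableSet_Ici, hset]
      rw [integral_Icc_eq_integral_Ioc, ← intervalIntegral.integral_of_le hτb]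
      exact rpow_prim hγ hτb
    rw [hval]
    have h1 : (b - τ) ^ γ / γ ≤ (b - a) ^ γ / γ := by
      have h0 : (b - τ) ^ γ ≤ (b - a) ^ γ :=
        Real.rpow_le_rpow (by linarith [hτ.2]) (by linarith [hτ.1]) hγ.le
      exact div_le_div_of_nonneg_right h0 hγ.le
    have h2 : (0:ℝ) ≤ (b - τ) ^ γ / γ :=
      div_nonneg (Real.rpow_nonneg (by linarith [hτ.2]) _) hγ.le
    rw [Real.norm_eq_abs, abs_mul, abs_of_nonneg h2, abs_abs]
    exact mul_le_mul_of_nonneg_right h1 (abs_nonneg _)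
    
lemma rlK_integrableOn (hγ : 0 < γ) (hab : a ≤ b) (hg : IntegrableOn g (Icc a b)) :
    IntegrableOn (rlK a γ g) (Icc a b) := by
  have hΦ := rlK_integrable_prod hγ hab hg
  have h1 := hΦ.integral_prod_left
  refine h1.congr ?_
  filter_upwards [ae_restrict_mem measurableSet_Icc] with s hs
  have he : (fun τ => ({q : ℝ × ℝ | q.2 ≤ q.1}.indicator
      (fun q => (q.1 - q.2) ^ (γ - 1) * g q.2)) (s, τ))
      = fun τ => (Iic s).indicator (fun τ => (s - τ) ^ (γ - 1) * g τ) τ := by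
    funext τ
    by_cases h : τ ≤ s <;> simp [indicator, h]
  rw [he, MeasureTheory.integral_indicator measurableSet_Iic,
    Measure.restrict_restrict measurableSet_Iic]
  have hset : Iic s ∩ Icc a b = Icc a s := by
    ext x; simp only [mem_inter_iff, mem_Iic, mem_Icc]
    constructor
    · rintro ⟨h1, h2, _⟩; exact ⟨h2, h1⟩
    · rintro ⟨h1, h2⟩; exact ⟨h2, h1, h2.trans hs.2⟩
  rw [hset, integral_Icc_eq_integral_Ioc, ← intervalIntegral.integral_of_le hs.1]
  rfl
end T2

section Fubini
variable {a t p r : ℝ} {g : ℝ → ℝ}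

lemma rlK_fubini (hp : 0 < p) (hr : 0 < r) (hpr : 1 ≤ p + r) (hat : a ≤ t)
    (hg : IntegrableOn g (Icc a t)) :
    IntervalIntegrable (fun s => (t - s) ^ (r - 1) * rlK a p g s) volume a t ∧
    ∫ s in a..t, (t - s) ^ (r - 1) * rlK a p g s
      = (Real.Gamma p * Real.Gamma r / Real.Gamma (p + r)) * rlK a (p + r) g t := by
  rcases eq_or_lt_of_le hat with rfl | hlt
  · constructor
    · exact IntervalIntegrable.refl
    · simp [rlK, intervalIntegral.integral_same]
  set μ := volume.restrict (Ioc a t) with hμ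
  set B := Real.Gamma p * Real.Gamma r / Real.Gamma (p + r) with hB
  set Φ : ℝ × ℝ → ℝ := fun q => ({q : ℝ × ℝ | q.2 ≤ q.1}.indicator
    (fun q => ((t - q.1) ^ (r - 1) * (q.1 - q.2) ^ (p - 1)) * g q.2)) q with hΦdef
  have hgm : AEStronglyMeasurable g μ := by
    refine hg.aestronglyMeasurable.mono_measure ?_
    exact Measure.restrict_mono Ioc_subset_Icc_self le_rfl
  have hkm : Measurable (fun q : ℝ × ℝ => (t - q.1) ^ (r - 1) * (q.1 - q.2) ^ (p - 1)) := by
    fun_prop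
  have hm : AEStronglyMeasurable Φ (μ.prod μ) := kernel_aesm hgm hkm
  -- some auxiliary set identities
  have hIci : ∀ τ : ℝ, a < τ → Ici τ ∩ Ioc a t = Icc τ t := by
    intro τ hτ
    ext x; simp only [mem_inter_iff, mem_Ici, mem_Ioc, mem_Icc]
    constructor
    · rintro ⟨h1, _, h3⟩; exact ⟨h1, h3⟩
    · rintro ⟨h1, h2⟩; exact ⟨h1, hτ.trans_le h1, h2⟩
  have hae_lt : ∀ᵐ τ ∂μ, τ ∈ Ioc a t ∧ τ ≠ t := by
    have h1 : ∀ᵐ τ ∂μ, τ ≠ t := by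
      rw [ae_iff]
      refine measure_mono_null (fun x hx => ?_) (?_ : μ {t} = 0)
      · simp only [mem_setOf_eq, not_not] at hx; simp [hx]
      · exact le_antisymm ((Measure.restrict_le_self _).trans_eq (by simp)) (zero_le)
    exact (ae_restrict_mem measurableSet_Ioc).and h1
  -- sectionwise description in s
  have hsec : ∀ τ : ℝ, (fun s => Φ (s, τ))
      = fun s => (Ici τ).indicator (fun s => ((t - s) ^ (r - 1) * (s - τ) ^ (p - 1)) * g τ) s := by
    intro τ; funext s
    by_cases h : τ ≤ s <;> simp [hΦdef, indicator, h]
  -- integrability of Φ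
  have hΦ : Integrable Φ (μ.prod μ) := by
    rw [integrable_prod_iff' hm]
    constructor
    · filter_upwards [hae_lt] with τ hτ
      have hτt : τ < t := lt_of_le_of_ne hτ.1.2 hτ.2
      rw [hsec τ, hμ, integrable_indicator_iff measurableSet_Ici]
      rw [IntegrableOn, Measure.restrict_restrict measurableSet_Ici, hIci τ hτ.1.1]
      have h1 := (beta_integrable hp hr hτt).mul_const (g τ)
      rw [intervalIntegrable_iff_integrableOn_Ioc_of_le hτt.le] at h1
      rwa [← integrableOn_Icc_iff_integrableOn_Ioc] at h1
    · have hmeas := ((hm.prod_swap).norm).integral_prod_right'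
      have hBnn : 0 ≤ B := by
        have := Real.Gamma_pos_of_pos hp
        have := Real.Gamma_pos_of_pos hr
        have := Real.Gamma_pos_of_pos (show 0 < p + r by linarith)
        positivity
      set C := (t - a) ^ (p + r - 1) * B with hC
      refine Integrable.mono' ((hg.mono_set Ioc_subset_Icc_self).norm.const_mul C) hmeas ?_
      filter_upwards [hae_lt] with τ hτ
      have hτa : a < τ := hτ.1.1
      have hτt : τ < t := lt_of_le_of_ne hτ.1.2 hτ.2
      have hval : ∫ s, ‖Φ (s, τ)‖ ∂μ = ((t - τ) ^ (p + r - 1) * B) * |g τ| := by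
        have he : ∀ s, s ∈ Ioc a t → ‖Φ (s, τ)‖
            = (Ici τ).indicator (fun s => (t - s) ^ (r - 1) * (s - τ) ^ (p - 1)) s * |g τ| := by
          intro s hs
          by_cases h : τ ≤ s
          · simp only [hΦdef, indicator, mem_setOf_eq, h, if_true, mem_Ici, if_pos h]
            rw [Real.norm_eq_abs, abs_mul, abs_of_nonneg
              (mul_nonneg (Real.rpow_nonneg (by linarith [hs.2]) _)
                (Real.rpow_nonneg (by linarith) _))]
          · simp [hΦdef, indicator, h]
        rw [setIntegral_congr_fun measurableSet_Ioc he]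
        rw [MeasureTheory.integral_mul_const, MeasureTheory.integral_indicator measurableSet_Ici,
          Measure.restrict_restrict measurableSet_Ici, hIci τ hτa,
          integral_Icc_eq_integral_Ioc, ← intervalIntegral.integral_of_le hτt.le,
          beta_eval hp hr hτt]
      rw [hval]
      have h0 : (t - τ) ^ (p + r - 1) ≤ (t - a) ^ (p + r - 1) :=
        Real.rpow_le_rpow (by linarith) (by linarith) (by linarith)
      have h2 : (0:ℝ) ≤ (t - τ) ^ (p + r - 1) * B :=
        mul_nonneg (Real.rpow_nonneg (by linarith) _) hBnn
      rw [Real.norm_eq_abs, abs_mul, abs_of_nonneg h2, abs_abs]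
      refine mul_le_mul_of_nonneg_right ?_ (abs_nonneg _)
      exact mul_le_mul_of_nonneg_right h0 hBnn
  -- LHS sections: a.e. equality of s-integrals
  have hLHS : ∀ s, s ∈ Ioc a t → (∫ τ, Φ (s, τ) ∂μ) = (t - s) ^ (r - 1) * rlK a p g s := by
    intro s hs
    have he : (fun τ => Φ (s, τ))
        = fun τ => (Iic s).indicator (fun τ => (t - s) ^ (r - 1) * ((s - τ) ^ (p - 1) * g τ)) τ := by
      funext τ
      by_cases h : τ ≤ s <;> simp [hΦdef, indicator, h, mul_assoc]
    rw [he, MeasureTheory.integral_indicator measurableSet_Iic, hμ,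
      Measure.restrict_restrict measurableSet_Iic]
    have hset : Iic s ∩ Ioc a t = Ioc a s := by
      ext x; simp only [mem_inter_iff, mem_Iic, mem_Ioc]
      constructor
      · rintro ⟨h1, h2, _⟩; exact ⟨h2, h1⟩
      · rintro ⟨h1, h2⟩; exact ⟨h2, h1, h2.trans hs.2⟩
    rw [hset, MeasureTheory.integral_const_mul, ← intervalIntegral.integral_of_le hs.1.le]
    rfl
  -- RHS sections
  have hRHS : ∀ᵐ τ ∂μ, (∫ s, Φ (s, τ) ∂μ) = B * ((t - τ) ^ (p + r - 1) * g τ) := by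
    filter_upwards [hae_lt] with τ hτ
    have hτa : a < τ := hτ.1.1
    have hτt : τ < t := lt_of_le_of_ne hτ.1.2 hτ.2
    rw [hsec τ, MeasureTheory.integral_indicator measurableSet_Ici, hμ,
      Measure.restrict_restrict measurableSet_Ici, hIci τ hτa,
      integral_Icc_eq_integral_Ioc, ← intervalIntegral.integral_of_le hτt.le]
    rw [intervalIntegral.integral_mul_const, beta_eval hp hr hτt]
    ring
  -- put it together via Fubini
  have hswap : ∫ s, (∫ τ, Φ (s, τ) ∂μ) ∂μ = ∫ τ, (∫ s, Φ (s, τ) ∂μ) ∂μ :=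
    MeasureTheory.integral_integral_swap (f := fun s τ => Φ (s, τ)) (by exact hΦ)
  have hintL : Integrable (fun s => ∫ τ, Φ (s, τ) ∂μ) μ := hΦ.integral_prod_left
  have hL : IntegrableOn (fun s => (t - s) ^ (r - 1) * rlK a p g s) (Ioc a t) := by
    refine hintL.congr ?_
    filter_upwards [ae_restrict_mem measurableSet_Ioc] with s hs
    exact hLHS s hs
  constructor
  · rwa [intervalIntegrable_iff_integrableOn_Ioc_of_le hat]
  · rw [intervalIntegral.integral_of_le hat]
    have e1 : ∫ s in Ioc a t, (t - s) ^ (r - 1) * rlK a p g s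
        = ∫ s, (∫ τ, Φ (s, τ) ∂μ) ∂μ := by
      refine integral_congr_ae ?_
      filter_upwards [ae_restrict_mem measurableSet_Ioc] with s hs
      exact (hLHS s hs).symm
    have e2 : ∫ τ, (∫ s, Φ (s, τ) ∂μ) ∂μ = B * rlK a (p + r) g t := by
      rw [integral_congr_ae hRHS, MeasureTheory.integral_const_mul]
      congr 1
      rw [← intervalIntegral.integral_of_le hat]
      rfl
    rw [e1, hswap, e2]
end Fubini

lemma ae_ne_pt {S : Set ℝ} (c : ℝ) : ∀ᵐ x ∂(volume.restrict S), x ≠ c := by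
  rw [ae_iff]
  refine measure_mono_null (fun x hx => ?_) (?_ : volume.restrict S {c} = 0)
  · simp only [mem_setOf_eq, not_not] at hx; simp [hx]
  · exact le_antisymm ((Measure.restrict_le_self _).trans_eq (by simp)) (zero_le)

lemma ae_eq_of_primitive {a b : ℝ} (hab : a ≤ b) {f₁ f₂ : ℝ → ℝ}
    (h₁ : IntegrableOn f₁ (Icc a b)) (h₂ : IntegrableOn f₂ (Icc a b))
    (h : ∀ t ∈ Icc a b, ∫ s in a..t, f₁ s = ∫ s in a..t, f₂ s) :
    ∀ᵐ s ∂(volume.restrict (Icc a b)), f₁ s = f₂ s := by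
  set d : ℝ → ℝ := (Ioc a b).indicator (fun s => f₁ s - f₂ s) with hd
  have hsub : IntegrableOn (fun s => f₁ s - f₂ s) (Icc a b) := h₁.sub h₂
  have hdint : Integrable d volume := by
    rw [hd, integrable_indicator_iff measurableSet_Ioc]
    exact hsub.mono_set Ioc_subset_Icc_self
  have hii : ∀ (f : ℝ → ℝ), IntegrableOn f (Icc a b) → ∀ u v : ℝ, a ≤ u → u ≤ v → v ≤ b →
      IntervalIntegrable f volume u v := by
    intro f hf u v hu huv hv
    rw [intervalIntegrable_iff_integrableOn_Ioc_of_le huv]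
    exact hf.mono_set (subset_trans Ioc_subset_Icc_self (Icc_subset_Icc hu hv))
  have hzero : ∀ u v : ℝ, ∫ s in Ioc u v, d s = 0 := by
    intro u v
    rcases le_or_gt v u with h' | h'
    · rw [Set.Ioc_eq_empty h'.not_gt]; simp
    rw [hd, MeasureTheory.setIntegral_indicator measurableSet_Ioc, Set.Ioc_inter_Ioc]
    rcases le_or_gt (v ⊓ b) (u ⊔ a) with h2 | h2
    · rw [Set.Ioc_eq_empty h2.not_gt]; simp
    set u' := u ⊔ a
    set v' := v ⊓ b
    have hau' : a ≤ u' := le_sup_right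
    have hv'b : v' ≤ b := inf_le_right
    have hu'v' : u' ≤ v' := h2.le
    have e1 : ∫ s in Ioc u' v', (f₁ s - f₂ s) = ∫ s in u'..v', (f₁ s - f₂ s) :=
      (intervalIntegral.integral_of_le hu'v').symm
    rw [e1, intervalIntegral.integral_sub (hii _ h₁ u' v' hau' hu'v' hv'b)
      (hii _ h₂ u' v' hau' hu'v' hv'b)]
    have key : ∀ (f : ℝ → ℝ), IntegrableOn f (Icc a b) →
        ∫ s in u'..v', f s = (∫ s in a..v', f s) - ∫ s in a..u', f s := by
      intro f hf
      have := intervalIntegral.integral_add_adjacent_intervals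
        (hii _ hf a u' le_rfl hau' (hu'v'.trans hv'b)) (hii _ hf u' v' hau' hu'v' hv'b)
      linarith [this]
    rw [key _ h₁, key _ h₂, h v' ⟨hau'.trans hu'v', hv'b⟩, h u' ⟨hau', hu'v'.trans hv'b⟩]
    ring
  have hd0 : ∀ᵐ x ∂(volume : Measure ℝ), d x = 0 := by
    have hloc : LocallyIntegrable d volume := hdint.locallyIntegrable
    filter_upwards [IsUnifLocDoublingMeasure.ae_tendsto_average (volume : Measure ℝ) hloc 1]
      with x hx
    have hδ : Filter.Tendsto (fun n : ℕ => 1/((n:ℝ)+1)) Filter.atTop (nhdsWithin 0 (Ioi 0)) := by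
      apply tendsto_nhdsWithin_of_tendsto_nhds_of_eventually_within
      · exact tendsto_one_div_add_atTop_nhds_zero_nat
      · filter_upwards with n
        simp only [mem_Ioi]
        positivity
    have hmem : ∀ᶠ n : ℕ in Filter.atTop, x ∈ Metric.closedBall x (1 * (1/((n:ℝ)+1))) := by
      filter_upwards with n
      apply Metric.mem_closedBall_self
      positivity
    have htend := hx (fun _ : ℕ => x) (fun n : ℕ => 1/((n:ℝ)+1)) hδ hmem
    have hz : ∀ n : ℕ, (⨍ y in Metric.closedBall x (1/((n:ℝ)+1)), d y ∂volume) = 0 := by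
      intro n
      rw [MeasureTheory.setAverage_eq, Real.closedBall_eq_Icc, integral_Icc_eq_integral_Ioc,
        hzero]
      simp
    rw [show (fun n : ℕ => ⨍ y in Metric.closedBall x (1/((n:ℝ)+1)), d y ∂volume)
      = fun _ : ℕ => (0:ℝ) from funext hz] at htend
    exact tendsto_nhds_unique htend tendsto_const_nhds
  filter_upwards [ae_restrict_of_ae hd0, ae_restrict_mem measurableSet_Icc, ae_ne_pt a]
    with x hx1 hx2 hx3
  have hxm : x ∈ Ioc a b := ⟨lt_of_le_of_ne hx2.1 (Ne.symm hx3), hx2.2⟩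
  rw [hd] at hx1
  rw [Set.indicator_of_mem hxm] at hx1
  linarith [hx1]

lemma ae_restrict_of_forall_Icc {If : Set ℝ} {a : ℝ} (haI : a ∈ If) (hIsub : If ⊆ Ici a)
    (hIord : If.OrdConnected) {P : ℝ → Prop}
    (h : ∀ b ∈ If, ∀ᵐ x ∂(volume.restrict (Icc a b)), P x) :
    ∀ᵐ x ∂(volume.restrict If), P x := by
  have hIm : MeasurableSet If := hIord.measurableSet
  have hb : ∀ b ∈ If, volume ({x | ¬ P x} ∩ Icc a b) = 0 := by
    intro b hbI
    have h2 := h b hbI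
    rw [ae_iff, Measure.restrict_apply' measurableSet_Icc] at h2
    exact h2
  rw [ae_iff, Measure.restrict_apply' hIm]
  by_cases hB : BddAbove If
  · obtain ⟨u, -, hu2, hu3⟩ := exists_seq_tendsto_sSup ⟨a, haI⟩ hB
    have hcover : {x | ¬ P x} ∩ If ⊆ {sSup If} ∪ ⋃ n, ({x | ¬ P x} ∩ Icc a (u n)) := by
      rintro x ⟨hxN, hxI⟩
      rcases eq_or_lt_of_le (le_csSup hB hxI) with heq | hlt
      · left; simp [heq]
      · right
        have hev : ∀ᶠ n in Filter.atTop, x < u n := hu2.eventually_const_lt hlt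
        obtain ⟨n, hn⟩ := hev.exists
        exact mem_iUnion.2 ⟨n, hxN, hIsub hxI, hn.le⟩
    refine measure_mono_null hcover (measure_union_null (by simp) ?_)
    exact measure_iUnion_null fun n => hb _ (hu3 n)
  · rw [not_bddAbove_iff] at hB
    have hv : ∀ n : ℕ, ∃ y ∈ If, a + n < y := fun n => hB (a + n)
    choose v hv1 hv2 using hv
    have hcover : {x | ¬ P x} ∩ If ⊆ ⋃ n, ({x | ¬ P x} ∩ Icc a (v n)) := by
      rintro x ⟨hxN, hxI⟩
      obtain ⟨n, hn⟩ := exists_nat_ge (x - a)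
      refine mem_iUnion.2 ⟨n, hxN, hIsub hxI, ?_⟩
      have := hv2 n
      linarith
    exact measure_mono_null hcover (measure_iUnion_null fun n => hb _ (hv1 n))

lemma intervalIntegral_congr_restrict {S : Set ℝ} (hS : MeasurableSet S) {f g : ℝ → ℝ}
    (hae : ∀ᵐ x ∂(volume.restrict S), f x = g x) {u v : ℝ} (hsub : Set.uIoc u v ⊆ S) :
    ∫ x in u..v, f x = ∫ x in u..v, g x := by
  refine intervalIntegral.integral_congr_ae ?_
  filter_upwards [(ae_restrict_iff' hS).1 hae] with x hx hxI
  exact hx (hsub hxI)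

theorem statement4 (a : ℝ) (If : Set ℝ)
    (haI : a ∈ If) (hIsub : If ⊆ Set.Ici a) (hIint : (interior If).Nonempty)
    (hIord : If.OrdConnected)
    (m : ℕ) (hm : 0 < m) (α : Fin m → ℝ) (hα : ∀ i, 0 < α i ∧ α i ≤ 1)
    (qa : Fin m → ℝ) (F : (Fin m → ℝ) → ℝ → Fin m → ℝ)
    -- Carathéodory assumptions
    (hFmeas : ∀ x, MeasureTheory.AEStronglyMeasurable (fun t => F x t)
      (MeasureTheory.volume.restrict If))
    (hFcont : ∀ᵐ t ∂(MeasureTheory.volume.restrict If), Continuous fun x => F x t)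
    -- `F` preserves integrability
    (hFpres : ∀ q : ℝ → Fin m → ℝ, (∀ i, LocIntegrableOn a If fun t => q t i) →
      ∀ i, LocIntegrableOn a If fun t => F (q t) t i)
    (q : ℝ → Fin m → ℝ) :
    IsRLSolution a If α qa F q ↔
      ((∀ i, LocIntegrableOn a If fun t => q t i) ∧
        ∀ i, ∀ᵐ t ∂(MeasureTheory.volume.restrict If),
          q t i = (t - a) ^ (α i - 1) / Real.Gamma (α i) * qa i
            + (1 / Real.Gamma (α i)) * ∫ τ in a..t, (t - τ) ^ (α i - 1) * F (q τ) τ i) := by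
  have hIm : MeasurableSet If := hIord.measurableSet
  have hIccIf : ∀ b ∈ If, Icc a b ⊆ If := fun b hb => hIord.out haI hb
  constructor
  · rintro ⟨hqint, hsol⟩
    refine ⟨hqint, fun i => ?_⟩
    obtain ⟨h, hhint, hae1, hae2⟩ := hsol i
    have hγ0 : 0 < α i := (hα i).1
    have hΓγ : (0:ℝ) < Real.Gamma (α i) := Real.Gamma_pos_of_pos hγ0
    rcases eq_or_lt_of_le (hα i).2 with hγ1 | hγ1
    · -- case α i = 1
      filter_upwards [hae1, ae_restrict_mem hIm] with t ht1 htI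
      have hta : a ≤ t := hIsub htI
      have hIoc : Set.uIoc a t ⊆ If := by
        rw [Set.uIoc_of_le hta]
        exact fun x hx => hIccIf t htI ⟨hx.1.le, hx.2⟩
      simp only [rlInt] at ht1
      rw [if_pos (show (1 - α i) = 0 by rw [hγ1]; ring)] at ht1
      have hcong : ∫ τ in a..t, h τ = ∫ τ in a..t, F (q τ) τ i :=
        intervalIntegral_congr_restrict hIm hae2 hIoc
      rw [hγ1]
      simp only [sub_self, Real.rpow_zero, Real.Gamma_one, div_one, one_div, inv_one, one_mul]
      rw [ht1, hcong]
    · -- main case α i < 1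
      have h1γ : 0 < 1 - α i := by linarith
      have hΓ1γ : (0:ℝ) < Real.Gamma (1 - α i) := Real.Gamma_pos_of_pos h1γ
      apply ae_restrict_of_forall_Icc haI hIsub hIord
      intro b hbIf
      have hab : a ≤ b := hIsub hbIf
      have hsubIf : Icc a b ⊆ If := hIccIf b hbIf
      have hq_b : IntegrableOn (fun t => q t i) (Icc a b) := hqint i b hbIf
      have hh_b : IntegrableOn h (Icc a b) := hhint b hbIf
      have hE1 : ∀ᵐ s ∂(volume.restrict (Icc a b)),
          (1 / Real.Gamma (1 - α i)) * rlK a (1 - α i) (fun τ => q τ i) s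
            = qa i + rlK a 1 h s := by
        filter_upwards [ae_restrict_of_ae_restrict_of_subset hsubIf hae1] with s hs
        rw [rlK_one]
        simp only [rlInt] at hs
        rw [if_neg (show ¬ (1 - α i) = 0 by intro hcon; rw [sub_eq_zero] at hcon; linarith)] at hs
        exact hs
      -- the key primitive identity
      have hstar : ∀ t ∈ Icc a b,
          Real.Gamma (α i) * ∫ s in a..t, q s i
            = (t - a) ^ (α i) / (α i) * qa i
              + (Real.Gamma (α i) / Real.Gamma (1 + α i)) * rlK a (1 + α i) h t := by
        intro t ht
        have hta : a ≤ t := ht.1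
        have hgt : IntegrableOn (fun τ => q τ i) (Icc a t) :=
          hq_b.mono_set (Icc_subset_Icc_right ht.2)
        have hht : IntegrableOn h (Icc a t) := hh_b.mono_set (Icc_subset_Icc_right ht.2)
        have hfub1 := rlK_fubini h1γ hγ0 (by linarith) hta hgt
        have hfub2 := rlK_fubini one_pos hγ0 (by linarith) hta hht
        have hIocsub : Set.uIoc a t ⊆ Icc a b := by
          rw [Set.uIoc_of_le hta]
          exact fun x hx => ⟨hx.1.le, hx.2.trans ht.2⟩
        have hcong : ∫ s in a..t,
              (t - s) ^ (α i - 1) * ((1 / Real.Gamma (1 - α i)) * rlK a (1 - α i) (fun τ => q τ i) s)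
            = ∫ s in a..t, (t - s) ^ (α i - 1) * (qa i + rlK a 1 h s) := by
          refine intervalIntegral.integral_congr_ae ?_
          filter_upwards [(ae_restrict_iff' measurableSet_Icc).1 hE1] with s hsE hsI
          rw [hsE (hIocsub hsI)]
        have hlhs : ∫ s in a..t,
              (t - s) ^ (α i - 1) * ((1 / Real.Gamma (1 - α i)) * rlK a (1 - α i) (fun τ => q τ i) s)
            = Real.Gamma (α i) * ∫ s in a..t, q s i := by
          have e : (fun s => (t - s) ^ (α i - 1) *
                ((1 / Real.Gamma (1 - α i)) * rlK a (1 - α i) (fun τ => q τ i) s))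
              = fun s => (1 / Real.Gamma (1 - α i)) *
                ((t - s) ^ (α i - 1) * rlK a (1 - α i) (fun τ => q τ i) s) :=
            funext fun s => by ring
          rw [e, intervalIntegral.integral_const_mul, hfub1.2]
          rw [show (1 - α i) + α i = 1 by ring, Real.Gamma_one, div_one, rlK_one]
          have : ∫ τ in a..t, q τ i = ∫ s in a..t, q s i := rfl
          rw [this]
          field_simp
        have hker : IntervalIntegrable (fun s => (t - s) ^ (α i - 1) * qa i) volume a t :=
          (rpow_refl_integrable hγ0 a t).mul_const _
        have hrhs : ∫ s in a..t, (t - s) ^ (α i - 1) * (qa i + rlK a 1 h s)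
            = (t - a) ^ (α i) / (α i) * qa i
              + (Real.Gamma (α i) / Real.Gamma (1 + α i)) * rlK a (1 + α i) h t := by
          have e : (fun s => (t - s) ^ (α i - 1) * (qa i + rlK a 1 h s))
              = fun s => (t - s) ^ (α i - 1) * qa i + (t - s) ^ (α i - 1) * rlK a 1 h s :=
            funext fun s => by ring
          rw [e, intervalIntegral.integral_add hker hfub2.1]
          rw [intervalIntegral.integral_mul_const, rpow_prim' hγ0 hta, hfub2.2, Real.Gamma_one,
            one_mul]
        rw [← hlhs, hcong, hrhs]
      set w : ℝ → ℝ := fun s => (s - a) ^ (α i - 1) / Real.Gamma (α i) * qa i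
        + (1 / Real.Gamma (α i)) * rlK a (α i) h s with hwdef
      have hw1 : IntegrableOn (fun s => (s - a) ^ (α i - 1) / Real.Gamma (α i) * qa i)
          (Icc a b) := by
        have h2 := ((rpow_shift_integrable hγ0 a b).div_const (Real.Gamma (α i))).mul_const (qa i)
        rw [intervalIntegrable_iff_integrableOn_Ioc_of_le hab] at h2
        rwa [← integrableOn_Icc_iff_integrableOn_Ioc] at h2
      have hw_b : IntegrableOn w (Icc a b) :=
        hw1.add ((rlK_integrableOn hγ0 hab hh_b).const_mul _)
      have hprim : ∀ t ∈ Icc a b, ∫ s in a..t, q s i = ∫ s in a..t, w s := by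
        intro t ht
        have hta : a ≤ t := ht.1
        have hht : IntegrableOn h (Icc a t) := hh_b.mono_set (Icc_subset_Icc_right ht.2)
        have hfub3 := rlK_fubini hγ0 one_pos (by linarith) hta hht
        have hw1t : IntervalIntegrable (fun s => (s - a) ^ (α i - 1) / Real.Gamma (α i) * qa i)
            volume a t := ((rpow_shift_integrable hγ0 a t).div_const _).mul_const _
        have hK1 : IntervalIntegrable (fun s => (1 / Real.Gamma (α i)) * rlK a (α i) h s)
            volume a t := by
          refine (hfub3.1.const_mul (1 / Real.Gamma (α i))).congr ?_
          intro s _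
          dsimp only
          rw [sub_self, Real.rpow_zero, one_mul]
        have hwint : ∫ s in a..t, w s
            = (t - a) ^ (α i) / (α i) / Real.Gamma (α i) * qa i
              + (1 / Real.Gamma (α i)) * ((Real.Gamma (α i) / Real.Gamma (α i + 1))
                * rlK a (α i + 1) h t) := by
          rw [hwdef]
          rw [intervalIntegral.integral_add hw1t hK1]
          congr 1
          · have e : (fun s => (s - a) ^ (α i - 1) / Real.Gamma (α i) * qa i)
                = fun s => (qa i / Real.Gamma (α i)) * (s - a) ^ (α i - 1) :=
              funext fun s => by ring
            rw [e, intervalIntegral.integral_const_mul, rpow_prim hγ0 hta]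
            ring
          · rw [intervalIntegral.integral_const_mul]
            congr 1
            have e2 : ∫ s in a..t, rlK a (α i) h s
                = ∫ s in a..t, (t - s) ^ ((1:ℝ) - 1) * rlK a (α i) h s := by
              refine intervalIntegral.integral_congr (fun s _ => ?_)
              rw [sub_self, Real.rpow_zero, one_mul]
            rw [e2, hfub3.2, Real.Gamma_one, mul_one]
        rw [hwint]
        have hs := hstar t ht
        have hΓa1 : (0:ℝ) < Real.Gamma (1 + α i) := Real.Gamma_pos_of_pos (by linarith)
        rw [show (α i) + 1 = 1 + α i by ring]
        field_simp at hs ⊢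
        nlinarith [hs]
      filter_upwards [ae_eq_of_primitive hab hq_b hw_b hprim,
        ae_restrict_mem measurableSet_Icc] with t htqw htmem
      rw [htqw]
      simp only [hwdef]
      have hIoc : Set.uIoc a t ⊆ If := by
        rw [Set.uIoc_of_le htmem.1]
        exact fun x hx => hsubIf ⟨hx.1.le, hx.2.trans htmem.2⟩
      have hcong2 : rlK a (α i) h t = ∫ τ in a..t, (t - τ) ^ (α i - 1) * F (q τ) τ i := by
        refine intervalIntegral.integral_congr_ae ?_
        filter_upwards [(ae_restrict_iff' hIm).1 hae2] with x hx hxI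
        rw [hx (hIoc hxI)]
      rw [hcong2]
  · rintro ⟨hqint, hQ⟩
    refine ⟨hqint, fun i => ?_⟩
    have hγ0 : 0 < α i := (hα i).1
    have hΓγ : (0:ℝ) < Real.Gamma (α i) := Real.Gamma_pos_of_pos hγ0
    refine ⟨fun τ => F (q τ) τ i, hFpres q hqint i, ?_, Filter.Eventually.of_forall fun t => rfl⟩
    rcases eq_or_lt_of_le (hα i).2 with hγ1 | hγ1
    · filter_upwards [hQ i] with t ht1
      simp only [rlInt]
      rw [if_pos (show (1 - α i) = 0 by rw [hγ1]; ring), ht1, hγ1]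
      simp only [sub_self, Real.rpow_zero, Real.Gamma_one, div_one, one_div, inv_one, one_mul]
    · have h1γ : 0 < 1 - α i := by linarith
      have hΓ1γ : (0:ℝ) < Real.Gamma (1 - α i) := Real.Gamma_pos_of_pos h1γ
      filter_upwards [ae_restrict_mem hIm, ae_ne_pt a] with t htI htne
      have hta : a < t := lt_of_le_of_ne (hIsub htI) (Ne.symm htne)
      have hsubt : Icc a t ⊆ If := hIccIf t htI
      have hft : IntegrableOn (fun τ => F (q τ) τ i) (Icc a t) := hFpres q hqint i t htI
      simp only [rlInt]
      rw [if_neg (show ¬ (1 - α i) = 0 by intro hcon; rw [sub_eq_zero] at hcon; linarith)]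
      have hIoc : Set.uIoc a t ⊆ If := by
        rw [Set.uIoc_of_le hta.le]
        exact fun x hx => hsubt ⟨hx.1.le, hx.2⟩
      have hcong : ∫ s in a..t, (t - s) ^ ((1 - α i) - 1) * q s i
          = ∫ s in a..t, (t - s) ^ ((1 - α i) - 1) *
            ((s - a) ^ (α i - 1) / Real.Gamma (α i) * qa i
              + (1 / Real.Gamma (α i)) * rlK a (α i) (fun τ => F (q τ) τ i) s) := by
        refine intervalIntegral.integral_congr_ae ?_
        filter_upwards [(ae_restrict_iff' hIm).1 (hQ i)] with s hs hsI
        rw [hs (hIoc hsI)]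
        rfl
      have hfubB := rlK_fubini hγ0 h1γ (by linarith) hta.le hft
      have hAint : IntervalIntegrable
          (fun s => (t - s) ^ ((1 - α i) - 1) *
            ((s - a) ^ (α i - 1) / Real.Gamma (α i) * qa i)) volume a t := by
        refine ((beta_integrable hγ0 h1γ hta).mul_const
          (qa i / Real.Gamma (α i))).congr ?_
        intro s _
        ring
      have hBint : IntervalIntegrable
          (fun s => (t - s) ^ ((1 - α i) - 1) *
            ((1 / Real.Gamma (α i)) * rlK a (α i) (fun τ => F (q τ) τ i) s)) volume a t := by
        refine (hfubB.1.const_mul (1 / Real.Gamma (α i))).congr ?_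
        intro s _
        ring
      have hAval : ∫ s in a..t, (t - s) ^ ((1 - α i) - 1) *
            ((s - a) ^ (α i - 1) / Real.Gamma (α i) * qa i)
          = Real.Gamma (1 - α i) * qa i := by
        have e : (fun s => (t - s) ^ ((1 - α i) - 1) *
              ((s - a) ^ (α i - 1) / Real.Gamma (α i) * qa i))
            = fun s => ((t - s) ^ ((1 - α i) - 1) * (s - a) ^ (α i - 1))
              * (qa i / Real.Gamma (α i)) := funext fun s => by ring
        rw [e, intervalIntegral.integral_mul_const, beta_eval hγ0 h1γ hta]
        rw [show α i + (1 - α i) = 1 by ring]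
        rw [sub_self, Real.rpow_zero, Real.Gamma_one, div_one, one_mul]
        field_simp
      have hBval : ∫ s in a..t, (t - s) ^ ((1 - α i) - 1) *
            ((1 / Real.Gamma (α i)) * rlK a (α i) (fun τ => F (q τ) τ i) s)
          = Real.Gamma (1 - α i) * ∫ τ in a..t, F (q τ) τ i := by
        have e : (fun s => (t - s) ^ ((1 - α i) - 1) *
              ((1 / Real.Gamma (α i)) * rlK a (α i) (fun τ => F (q τ) τ i) s))
            = fun s => (1 / Real.Gamma (α i)) *
              ((t - s) ^ ((1 - α i) - 1) * rlK a (α i) (fun τ => F (q τ) τ i) s) :=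
          funext fun s => by ring
        rw [e, intervalIntegral.integral_const_mul, hfubB.2]
        rw [show α i + (1 - α i) = 1 by ring, Real.Gamma_one, div_one, rlK_one]
        field_simp
      have hsplit : ∫ s in a..t, (t - s) ^ ((1 - α i) - 1) *
            ((s - a) ^ (α i - 1) / Real.Gamma (α i) * qa i
              + (1 / Real.Gamma (α i)) * rlK a (α i) (fun τ => F (q τ) τ i) s)
          = Real.Gamma (1 - α i) * qa i
            + Real.Gamma (1 - α i) * ∫ τ in a..t, F (q τ) τ i := by
        have e : (fun s => (t - s) ^ ((1 - α i) - 1) *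
              ((s - a) ^ (α i - 1) / Real.Gamma (α i) * qa i
                + (1 / Real.Gamma (α i)) * rlK a (α i) (fun τ => F (q τ) τ i) s))
            = fun s => (t - s) ^ ((1 - α i) - 1) *
                ((s - a) ^ (α i - 1) / Real.Gamma (α i) * qa i)
              + (t - s) ^ ((1 - α i) - 1) *
                ((1 / Real.Gamma (α i)) * rlK a (α i) (fun τ => F (q τ) τ i) s) :=
          funext fun s => by ring
        rw [e, intervalIntegral.integral_add hAint hBint, hAval, hBval]
      rw [hcong, hsplit]
      field_simp
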